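/- Predicative embedding of rewriting: Let R be a POE*-compatible TRS and ℓ the maximal size of right-hand sides of R. If s ∈ T_n and s →_R t (call-by-value rewriting), then Q(s) ▷_ℓ Q(t), where Q is the predicative interpretation. -/

import Mathlib

/-- Terms over signature `F` and variables `V`, with the argument positions of
each function symbol separated into normal (`nrm`) and safe (`saf`) ones. -/
inductive Tm (F V : Type) where
  | var : V → Tm F V
  | app : F → List (Tm F V) → List (Tm F V) → Tm F V

namespace Tm

/-- Values: terms built from constructors (symbols in `C`) only; constructors
have only safe argument positions. -/
inductive IsVal {F V : Type} (C : Set F) : Tm F V → Prop where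
  | app {f ss} : f ∈ C → (∀ t ∈ ss, IsVal C t) → IsVal C (Tm.app f [] ss)

/-- Constructor terms: terms built from constructors and variables only. -/
inductive IsConTm {F V : Type} (C : Set F) : Tm F V → Prop where
  | var (v : V) : IsConTm C (Tm.var v)
  | app {f ss} : f ∈ C → (∀ t ∈ ss, IsConTm C t) → IsConTm C (Tm.app f [] ss)

/-- Application of a substitution to a term. -/
def subst {F V : Type} (σ : V → Tm F V) : Tm F V → Tm F V
  | Tm.var v => σ v
  | Tm.app f ns ss => Tm.app f (ns.attach.map fun t => subst σ t.1)
                               (ss.attach.map fun t => subst σ t.1)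
  decreasing_by
    · have := List.sizeOf_lt_of_mem t.2; simp; omega
    · have := List.sizeOf_lt_of_mem t.2; simp; omega

/-- The size of a term: the number of symbols occurring in it. -/
def size {F V : Type} : Tm F V → ℕ
  | Tm.var _ => 1
  | Tm.app _ ns ss => 1 + ((ns.attach.map fun t => size t.1).sum
                            + (ss.attach.map fun t => size t.1).sum)
  decreasing_by
    · have := List.sizeOf_lt_of_mem t.2; simp; omega
    · have := List.sizeOf_lt_of_mem t.2; simp; omega

/-- `SubEq s t` : `t` is a (not necessarily proper) subterm of `s`. -/
inductive SubEq {F V : Type} : Tm F V → Tm F V → Prop where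
  | refl (t) : SubEq t t
  | nrm {f ns ss s t} : s ∈ ns → SubEq s t → SubEq (Tm.app f ns ss) t
  | saf {f ns ss s t} : s ∈ ss → SubEq s t → SubEq (Tm.app f ns ss) t

/-- `NSub s t` : `t` is a subterm of a normal argument of `s`
(the relation written `s ⊳ⁿ t`). -/
def NSub {F V : Type} (s t : Tm F V) : Prop :=
  ∃ f ns ss, s = Tm.app f ns ss ∧ ∃ u ∈ ns, SubEq u t

/-- Call-by-value rewriting for a set of rules `R`: root steps instantiate a
rule with a substitution mapping variables to values, and rewriting is closed
under contexts. -/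
inductive Rew {F V : Type} (C : Set F) (R : Set (Tm F V × Tm F V)) : Tm F V → Tm F V → Prop where
  | root {l r : Tm F V} (σ : V → Tm F V) :
      (l, r) ∈ R → (∀ v, IsVal C (σ v)) → Rew C R (subst σ l) (subst σ r)
  | ctxtN {s t f ns₁ ns₂ ss} : Rew C R s t →
      Rew C R (Tm.app f (ns₁ ++ s :: ns₂) ss) (Tm.app f (ns₁ ++ t :: ns₂) ss)
  | ctxtS {s t f ns ss₁ ss₂} : Rew C R s t →
      Rew C R (Tm.app f ns (ss₁ ++ s :: ss₂)) (Tm.app f ns (ss₁ ++ t :: ss₂))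

mutual
  /-- The POE* order `⊐` induced by a precedence `prec` and constructors `C`
  (Definition of `poe`); symbols not in `C` are the defined symbols. -/
  inductive Poe {F V : Type} (prec : F → F → Prop) (C : Set F) : Tm F V → Tm F V → Prop where
    /- clause (1), `sᵢ = t`: `t` is one of the (normal or safe) arguments -/
    | sub {f ns ss t} : t ∈ ns ++ ss → Poe prec C (Tm.app f ns ss) t
    /- clause (1), `sᵢ ⊐ t` for an argument `sᵢ` -/
    | subtrans {f ns ss u t} : u ∈ ns ++ ss → Poe prec C u t → Poe prec C (Tm.app f ns ss) t
    /- clause (2): precedence descent; normal arguments of `t` are subterms of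
       normal arguments of `s`, and `s ⊐` every safe argument of `t` -/
    | ia {f g : F} {ns ss tn ts} : f ∉ C → prec f g →
        (∀ t' ∈ tn, NSub (Tm.app f ns ss) t') →
        (∀ t' ∈ ts, Poe prec C (Tm.app f ns ss) t') →
        Poe prec C (Tm.app f ns ss) (Tm.app g tn ts)
    /- clause (3): same defined root symbol, product descent on normal
       arguments, `s ⊐` every safe argument of `t` -/
    | tsc {f : F} {ns ss tn ts} : f ∉ C →
        PoeProd prec C ns tn →
        (∀ t' ∈ ts, Poe prec C (Tm.app f ns ss) t') →
        Poe prec C (Tm.app f ns ss) (Tm.app f tn ts)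

  /-- Product extension of `⊐`: componentwise equal-or-smaller with at least
  one strict decrease. -/
  inductive PoeProd {F V : Type} (prec : F → F → Prop) (C : Set F) :
      List (Tm F V) → List (Tm F V) → Prop where
    | strict {a b as bs} : Poe prec C a b → PoeGE prec C as bs →
        PoeProd prec C (a :: as) (b :: bs)
    | cons_eq {a as bs} : PoeProd prec C as bs → PoeProd prec C (a :: as) (a :: bs)
    | cons_lt {a b as bs} : Poe prec C a b → PoeProd prec C as bs →
        PoeProd prec C (a :: as) (b :: bs)

  /-- Componentwise equal-or-smaller (w.r.t. `⊐`) lists of equal length. -/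
  inductive PoeGE {F V : Type} (prec : F → F → Prop) (C : Set F) :
      List (Tm F V) → List (Tm F V) → Prop where
    | nil : PoeGE prec C [] []
    | cons_eq {a as bs} : PoeGE prec C as bs → PoeGE prec C (a :: as) (a :: bs)
    | cons_lt {a b as bs} : Poe prec C a b → PoeGE prec C as bs →
        PoeGE prec C (a :: as) (b :: bs)
end

/-- `R` is compatible with the POE* order induced by `prec`, and is a
constructor TRS: every left-hand side has a defined root symbol and its
arguments are constructor terms. -/
def PoeCompatible {F V : Type} (prec : F → F → Prop) (C : Set F)
    (R : Set (Tm F V × Tm F V)) : Prop :=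
  ∀ p ∈ R, Poe prec C p.1 p.2 ∧
    ∃ f ns ss, p.1 = Tm.app f ns ss ∧ f ∉ C ∧ ∀ t ∈ ns ++ ss, IsConTm C t

/-- `TN`: the set of terms whose normal argument positions hold values. -/
inductive TN {F V : Type} (C : Set F) : Tm F V → Prop where
  | val {t} : IsVal C t → TN C t
  | app {f ns ss} : (∀ v ∈ ns, IsVal C v) → (∀ t ∈ ss, TN C t) →
      TN C (Tm.app f ns ss)

end Tm

namespace Tm

/-- `SSub s t` : `t` is a strict subterm of `s`. -/
inductive SSub {F V : Type} : Tm F V → Tm F V → Prop where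
  | nrm {f ns ss u t} : u ∈ ns → SubEq u t → SSub (Tm.app f ns ss) t
  | saf {f ns ss u t} : u ∈ ss → SubEq u t → SSub (Tm.app f ns ss) t

/-- Elements compared by the auxiliary order `▷_ℓ`: normalised terms (inl) or
sequences of normalised terms (inr).  The normalised term `fⁿ(s₁,…,s_k)` is
represented as `f` applied to normal arguments `s₁,…,s_k` and no safe
arguments; the lifted precedence `fⁿ ≻' gⁿ ⇔ f ≻ g` is then `prec` itself. -/
abbrev TS (F V : Type) := Tm F V ⊕ List (Tm F V)

/-- Identification of a term with the singleton sequence. -/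
def toL {F V : Type} : TS F V → List (Tm F V) := Sum.elim (fun t => [t]) id

mutual
  /-- The auxiliary order `▷_ℓ` on (normalised) terms and sequences, induced
  by a precedence `prec` and the width bound `ℓ`. -/
  inductive Poel {F V : Type} (prec : F → F → Prop) (ℓ : ℕ) : TS F V → TS F V → Prop where
    /- clause (1): precedence descent to strict subterms, width at most ℓ -/
    | ia {f g : F} {ss ts : List (Tm F V)} :
        prec f g → (∀ t ∈ ts, SSub (Tm.app f ss []) t) → ts.length ≤ ℓ →
        Poel prec ℓ (Sum.inl (Tm.app f ss [])) (Sum.inl (Tm.app g ts []))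
    /- clause (2): same symbol, product extension of the strict-subterm order -/
    | tsc {f : F} {ss ts : List (Tm F V)} :
        List.Forall₂ (fun s t => s = t ∨ SSub s t) ss ts →
        (∃ i, ∃ (h₁ : i < ss.length) (h₂ : i < ts.length), SSub ss[i] ts[i]) →
        Poel prec ℓ (Sum.inl (Tm.app f ss [])) (Sum.inl (Tm.app f ts []))
    /- clause (3): descent from a term to a sequence of at most ℓ smaller terms -/
    | ialst {f : F} {ss ts : List (Tm F V)} :
        (∀ t ∈ ts, Poel prec ℓ (Sum.inl (Tm.app f ss [])) (Sum.inl t)) → ts.length ≤ ℓ →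
        Poel prec ℓ (Sum.inl (Tm.app f ss [])) (Sum.inr ts)
    /- clause (4): sequences, splitting `ts = b₁ ++ ⋯ ++ b_k` with
       `⟨s₁,…,s_k⟩` greater than `⟨b₁,…,b_k⟩` in the product extension of `▷_ℓ` -/
    | ms {ss ts : List (Tm F V)} (bs : List (TS F V)) :
        ts = (bs.map toL).flatten →
        PoelProd prec ℓ (ss.map Sum.inl) bs →
        Poel prec ℓ (Sum.inr ss) (Sum.inr ts)

  /-- Product extension of `▷_ℓ`: componentwise equal-or-smaller with at
  least one strict decrease. -/
  inductive PoelProd {F V : Type} (prec : F → F → Prop) (ℓ : ℕ) :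
      List (TS F V) → List (TS F V) → Prop where
    | strict {a b as bs} : Poel prec ℓ a b → PoelGE prec ℓ as bs →
        PoelProd prec ℓ (a :: as) (b :: bs)
    | cons_eq {a as bs} : PoelProd prec ℓ as bs → PoelProd prec ℓ (a :: as) (a :: bs)
    | cons_lt {a b as bs} : Poel prec ℓ a b → PoelProd prec ℓ as bs →
        PoelProd prec ℓ (a :: as) (b :: bs)

  /-- Componentwise equal-or-smaller (w.r.t. `▷_ℓ`) lists of equal length. -/
  inductive PoelGE {F V : Type} (prec : F → F → Prop) (ℓ : ℕ) :
      List (TS F V) → List (TS F V) → Prop where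
    | nil : PoelGE prec ℓ [] []
    | cons_eq {a as bs} : PoelGE prec ℓ as bs → PoelGE prec ℓ (a :: as) (a :: bs)
    | cons_lt {a b as bs} : Poel prec ℓ a b → PoelGE prec ℓ as bs →
        PoelGE prec ℓ (a :: as) (b :: bs)
end

mutual
  /-- The predicative interpretation `Q` (as a functional relation):
  a value is mapped to the empty sequence, and a non-value
  `f(s₁,…,s_k; s_{k+1},…,s_{k+l})` to `[fⁿ(s₁,…,s_k)] ++ Q(s_{k+1}) ++ ⋯ ++ Q(s_{k+l})`. -/
  inductive QRel {F V : Type} (C : Set F) : Tm F V → List (Tm F V) → Prop where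
    | val {t} : IsVal C t → QRel C t []
    | app {f ns ss qs} : ¬ IsVal C (Tm.app f ns ss) → QList C ss qs →
        QRel C (Tm.app f ns ss) (Tm.app f ns [] :: qs.flatten)

  /-- `Q` applied pointwise to a list of terms. -/
  inductive QList {F V : Type} (C : Set F) : List (Tm F V) → List (List (Tm F V)) → Prop where
    | nil : QList C [] []
    | cons {t q ts qs} : QRel C t q → QList C ts qs → QList C (t :: ts) (q :: qs)
end

end Tm


namespace Tm
variable {F V : Type} {C : Set F} {σ : V → Tm F V}

theorem subst_app (σ : V → Tm F V) (f : F) (ns ss : List (Tm F V)) :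
    subst σ (Tm.app f ns ss) = Tm.app f (ns.map (subst σ)) (ss.map (subst σ)) := by
  rw [subst]; simp

theorem size_app (f : F) (ns ss : List (Tm F V)) :
    size (Tm.app f ns ss) = 1 + ((ns.map size).sum + (ss.map size).sum) := by
  rw [size]; simp

theorem size_pos (t : Tm F V) : 1 ≤ size t := by
  cases t with
  | var v => rw [size]
  | app f ns ss => rw [size_app]; omega

theorem length_le_size_sum (l : List (Tm F V)) : l.length ≤ (l.map size).sum := by
  induction l with
  | nil => simp
  | cons a as ih => simp; have := size_pos a; omega

theorem size_lt_of_mem {t : Tm F V} {f ns ss} (h : t ∈ ns ++ ss) :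
    size t < size (Tm.app f ns ss) := by
  rw [size_app]
  rcases List.mem_append.1 h with h | h
  · have := List.le_sum_of_mem (List.mem_map_of_mem (f := size) h); omega
  · have := List.le_sum_of_mem (List.mem_map_of_mem (f := size) h); omega

end Tm
namespace Tm
variable {F V : Type} {C : Set F} {σ : V → Tm F V}

theorem subst_subeq {a b : Tm F V} (h : SubEq a b) : SubEq (subst σ a) (subst σ b) := by
  induction h with
  | refl t => exact SubEq.refl _
  | nrm hm _ ih => rw [subst_app]; exact SubEq.nrm (List.mem_map_of_mem hm) ih
  | saf hm _ ih => rw [subst_app]; exact SubEq.saf (List.mem_map_of_mem hm) ih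

theorem subst_ssub {a b : Tm F V} (h : SSub a b) : SSub (subst σ a) (subst σ b) := by
  cases h with
  | nrm hm hsub => rw [subst_app]; exact SSub.nrm (List.mem_map_of_mem hm) (subst_subeq hsub)
  | saf hm hsub => rw [subst_app]; exact SSub.saf (List.mem_map_of_mem hm) (subst_subeq hsub)

theorem ssub_subeq {a b : Tm F V} (h : SSub a b) : SubEq a b := by
  cases h with
  | nrm hm hsub => exact SubEq.nrm hm hsub
  | saf hm hsub => exact SubEq.saf hm hsub

theorem subeq_con {a b : Tm F V} (ha : IsConTm C a) (h : SubEq a b) : IsConTm C b := by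
  induction h with
  | refl t => exact ha
  | nrm hm _ ih => cases ha with | app _ h2 => simp at hm
  | saf hm _ ih => cases ha with | app _ h2 => exact ih (h2 _ hm)

theorem con_subst_val {a : Tm F V} (ha : IsConTm C a) (hσ : ∀ v, IsVal C (σ v)) :
    IsVal C (subst σ a) := by
  induction ha with
  | var v => rw [subst]; exact hσ v
  | app hf _ ih =>
    rw [subst_app]
    exact IsVal.app hf (by rintro t ht; rcases List.mem_map.1 ht with ⟨u, hu, rfl⟩; exact ih u hu)

theorem isval_f_mem {f : F} {ns ss : List (Tm F V)} (h : IsVal C (Tm.app f ns ss)) :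
    f ∈ C := by cases h; assumption

theorem isval_nrm_nil {f : F} {ns ss : List (Tm F V)} (h : IsVal C (Tm.app f ns ss)) :
    ns = [] := by cases h; rfl

theorem val_qrel_nil {t : Tm F V} {q} (hv : IsVal C t) (h : QRel C t q) : q = [] := by
  cases h with
  | val _ => rfl
  | app hnv _ => exact absurd hv hnv

/-- `Poe` from a constructor term is subterm descent. -/
theorem con_poe_ssub {a b : Tm F V} {prec : F → F → Prop}
    (h : Poe prec C a b) (ha : IsConTm C a) : SSub a b := by
  generalize hn : size a = n at *
  induction n using Nat.strong_induction_on generalizing a b with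
  | _ n ih =>
  cases h with
  | sub hm => cases ha with | app _ _ =>
      simp at hm
      exact SSub.saf hm (SubEq.refl _)
  | subtrans hm hu =>
    cases ha with | app _ h2 =>
    simp at hm
    have hcu : IsConTm C _ := h2 _ hm
    have hlt : size _ < n := hn ▸ size_lt_of_mem (List.mem_append_right [] hm)
    have := ih _ hlt hu hcu rfl
    exact SSub.saf hm (ssub_subeq this)
  | ia hf _ _ _ => cases ha with | app hc _ => exact absurd hc hf
  | tsc hf _ _ => cases ha with | app hc _ => exact absurd hc hf

theorem val_not_rew {R : Set (Tm F V × Tm F V)} {prec : F → F → Prop}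
    (hcompat : PoeCompatible prec C R) {s t : Tm F V}
    (h : Rew C R s t) (hv : IsVal C s) : False := by
  induction h with
  | @root l r σ hR hσ =>
    obtain ⟨_, f, ns, ss, heq, hf, _⟩ := hcompat _ hR
    have heq2 : l = Tm.app f ns ss := heq
    rw [heq2, subst_app] at hv
    exact hf (isval_f_mem hv)
  | ctxtN _ _ => have := isval_nrm_nil hv; simp at this
  | ctxtS hr ih =>
    cases hv with | app _ h2 => exact ih (h2 _ (by simp))

end Tm
namespace Tm
variable {F V : Type} {C : Set F} {σ : V → Tm F V}

theorem qlist_append {ts us : List (Tm F V)} {qs : List (List (Tm F V))}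
    (h : QList C (ts ++ us) qs) :
    ∃ q1 q2, qs = q1 ++ q2 ∧ QList C ts q1 ∧ QList C us q2 := by
  induction ts generalizing qs with
  | nil => exact ⟨[], qs, rfl, QList.nil, h⟩
  | cons a as ih =>
    cases h with
    | cons hq hrest =>
      obtain ⟨q1, q2, rfl, h1, h2⟩ := ih hrest
      exact ⟨_ :: q1, q2, rfl, QList.cons hq h1, h2⟩

theorem qlist_mem_flatten {ts : List (Tm F V)} {qs : List (List (Tm F V))}
    (h : QList C ts qs) {x} (hx : x ∈ qs.flatten) :
    ∃ t ∈ ts, ∃ q, QRel C t q ∧ x ∈ q := by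
  induction ts generalizing qs with
  | nil => cases h; simp at hx
  | cons a as ih =>
    cases h with
    | cons hq hrest =>
      rw [List.flatten_cons, List.mem_append] at hx
      rcases hx with hx | hx
      · exact ⟨_, by simp, _, hq, hx⟩
      · obtain ⟨t, ht, q, hq', hx⟩ := ih hrest hx
        exact ⟨t, by simp [ht], q, hq', hx⟩

theorem qlist_vals_nil {ts : List (Tm F V)} {qs : List (List (Tm F V))}
    (h : QList C ts qs) (hv : ∀ t ∈ ts, IsVal C t) : qs.flatten = [] := by
  induction ts generalizing qs with
  | nil => cases h; rfl
  | cons a as ih =>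
    cases h with
    | cons hq hrest =>
      rw [List.flatten_cons, val_qrel_nil (hv _ (by simp)) hq, List.nil_append]
      exact ih hrest fun t ht => hv t (by simp [ht])

/-- Elements of `Q`-images have the shape `f(ns;)`. -/
theorem qrel_shape {t : Tm F V} {q} (h : QRel C t q) {x} (hx : x ∈ q) :
    ∃ f ns, x = Tm.app f ns [] := by
  generalize hn : size t = n at *
  induction n using Nat.strong_induction_on generalizing t q x with
  | _ n ih =>
  cases h with
  | val _ => simp at hx
  | app hnv hq =>
    rw [List.mem_cons] at hx
    rcases hx with rfl | hx
    · exact ⟨_, _, rfl⟩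
    · obtain ⟨u, hu, q', hq', hx⟩ := qlist_mem_flatten hq hx
      exact ih _ (hn ▸ size_lt_of_mem (List.mem_append_right _ hu)) hq' hx rfl

mutual
theorem qrel_fun {t : Tm F V} {q q'} (h : QRel C t q) (h' : QRel C t q') : q = q' := by
  cases h with
  | val hv => exact (val_qrel_nil hv h').symm
  | app hnv hq =>
    cases h' with
    | val hv => exact absurd hv hnv
    | app _ hq' => rw [qlist_fun hq hq']
termination_by sizeOf t

theorem qlist_fun {ts : List (Tm F V)} {qs qs'} (h : QList C ts qs) (h' : QList C ts qs') :
    qs = qs' := by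
  cases h with
  | nil => cases h'; rfl
  | cons hq hrest =>
    cases h' with
    | cons hq' hrest' => rw [qrel_fun hq hq', qlist_fun hrest hrest']
termination_by sizeOf ts
end

theorem qrel_len (hσ : ∀ v, IsVal C (σ v)) :
    ∀ {u : Tm F V} {q}, QRel C (subst σ u) q → q.length ≤ size u := by
  intro u
  generalize hn : size u = n
  induction n using Nat.strong_induction_on generalizing u with
  | _ n ih =>
  subst hn
  cases u with
  | var v => intro q h; rw [val_qrel_nil (by rw [subst]; exact hσ v) h]; simp [size_pos]
  | app f ns ss =>
    intro q h
    rw [subst_app] at h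
    cases h with
    | val _ => simp
    | app hnv hq =>
      rw [size_app]
      have key : ∀ ss' ⊆ ss, ∀ {qs}, QList C (ss'.map (subst σ)) qs →
          qs.flatten.length ≤ (ss'.map size).sum := by
        intro ss' hsub
        induction ss' with
        | nil => intro qs h; cases h; simp
        | cons a as ih' =>
          intro qs h
          cases h with
          | cons hq hrest =>
            simp only [List.flatten_cons, List.length_append, List.map_cons, List.sum_cons]
            have h1 := ih _ (size_lt_of_mem (f := f) (ns := ns) (ss := ss)
              (List.mem_append_right _ (hsub (by simp)))) rfl hq
            have h2 := ih' (fun x hx => hsub (by simp [hx])) hrest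
            omega
      have := key ss (List.Subset.refl _) hq
      rw [List.length_cons]
      omega

end Tm
namespace Tm
variable {F V : Type} {C : Set F} {σ : V → Tm F V} {prec : F → F → Prop} {ℓ : ℕ}

theorem poelGE_refl (l : List (TS F V)) : PoelGE prec ℓ l l := by
  induction l with
  | nil => exact PoelGE.nil
  | cons a as ih => exact PoelGE.cons_eq ih

theorem poelGE_append {as bs : List (TS F V)} (h : PoelGE prec ℓ as bs) (cs : List (TS F V)) :
    PoelGE prec ℓ (as ++ cs) (bs ++ cs) := by
  induction as generalizing bs with
  | nil => cases h; simpa using poelGE_refl cs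
  | cons a as ih =>
    cases h with
    | cons_eq h => exact PoelGE.cons_eq (ih h)
    | cons_lt hp h => exact PoelGE.cons_lt hp (ih h)

theorem poelProd_append_right {as bs : List (TS F V)} (h : PoelProd prec ℓ as bs)
    (cs : List (TS F V)) : PoelProd prec ℓ (as ++ cs) (bs ++ cs) := by
  induction as generalizing bs with
  | nil => cases h
  | cons a as ih =>
    cases h with
    | strict hp h => exact PoelProd.strict hp (poelGE_append h cs)
    | cons_eq h => exact PoelProd.cons_eq (ih h)
    | cons_lt hp h => exact PoelProd.cons_lt hp (ih h)

theorem poelProd_append_left (cs : List (TS F V)) {as bs : List (TS F V)}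
    (h : PoelProd prec ℓ as bs) : PoelProd prec ℓ (cs ++ as) (cs ++ bs) := by
  induction cs with
  | nil => exact h
  | cons c cs ih => exact PoelProd.cons_eq ih

/-- A nonempty sequence of `Q`-shaped terms is `▷_ℓ` the empty sequence. -/
theorem poel_to_nil {qs : List (Tm F V)} (hne : qs ≠ [])
    (hshape : ∀ x ∈ qs, ∃ f ns, x = Tm.app f ns []) :
    Poel prec ℓ (Sum.inr qs) (Sum.inr ([] : List (Tm F V))) := by
  have key : ∀ x ∈ qs, Poel prec ℓ (Sum.inl x) (Sum.inr ([] : List (Tm F V))) := by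
    intro x hx
    obtain ⟨f, ns, rfl⟩ := hshape x hx
    exact Poel.ialst (by simp) (by simp)
  refine Poel.ms (List.replicate qs.length (Sum.inr [])) ?_ ?_
  · simp [toL]
  · cases qs with
    | nil => simp at hne
    | cons a as =>
      refine PoelProd.strict (key a (by simp)) ?_
      have : ∀ (l : List (Tm F V)), (∀ x ∈ l, Poel prec ℓ (Sum.inl x) (Sum.inr ([] : List (Tm F V)))) →
          PoelGE prec ℓ (l.map Sum.inl) (List.replicate l.length (Sum.inr [])) := by
        intro l hl
        induction l with
        | nil => exact PoelGE.nil
        | cons b bs ih =>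
          exact PoelGE.cons_lt (hl b (by simp)) (ih fun x hx => hl x (by simp [hx]))
      exact this as fun x hx => key x (by simp [hx])

theorem poeGE_forall2 {as bs : List (Tm F V)} (h : PoeGE prec C as bs)
    (hcon : ∀ a ∈ as, IsConTm C a) :
    List.Forall₂ (fun x y => x = y ∨ SSub x y) (as.map (subst σ)) (bs.map (subst σ)) := by
  induction as generalizing bs with
  | nil => cases h; simp
  | cons a as ih =>
    cases h with
    | cons_eq h =>
      exact List.Forall₂.cons (Or.inl rfl) (ih h fun x hx => hcon x (by simp [hx]))
    | cons_lt hp h =>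
      exact List.Forall₂.cons
        (Or.inr (subst_ssub (con_poe_ssub hp (hcon a (by simp)))))
        (ih h fun x hx => hcon x (by simp [hx]))

theorem poeProd_forall2 {as bs : List (Tm F V)} (h : PoeProd prec C as bs)
    (hcon : ∀ a ∈ as, IsConTm C a) :
    List.Forall₂ (fun x y => x = y ∨ SSub x y) (as.map (subst σ)) (bs.map (subst σ)) ∧
    ∃ i, ∃ (h₁ : i < (as.map (subst σ)).length) (h₂ : i < (bs.map (subst σ)).length),
      SSub (as.map (subst σ))[i] (bs.map (subst σ))[i] := by
  induction as generalizing bs with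
  | nil => cases h
  | cons a as ih =>
    cases h with
    | strict hp h =>
      have hss : SSub (subst σ a) (subst σ _) := subst_ssub (con_poe_ssub hp (hcon a (by simp)))
      refine ⟨List.Forall₂.cons (Or.inr hss) (poeGE_forall2 h fun x hx => hcon x (by simp [hx])),
        0, ?_, ?_, hss⟩ <;> simp
    | cons_eq h =>
      obtain ⟨h1, i, h₁, h₂, hss⟩ := ih h fun x hx => hcon x (by simp [hx])
      exact ⟨List.Forall₂.cons (Or.inl rfl) h1, i + 1, by simpa using h₁, by simpa using h₂,
        by simpa using hss⟩
    | cons_lt hp h =>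
      have hss : SSub (subst σ a) (subst σ _) := subst_ssub (con_poe_ssub hp (hcon a (by simp)))
      obtain ⟨h1, _⟩ := ih h fun x hx => hcon x (by simp [hx])
      exact ⟨List.Forall₂.cons (Or.inr hss) h1, 0, by simp, by simp, hss⟩

end Tm
namespace Tm
variable {F V : Type} {C : Set F} {σ : V → Tm F V} {prec : F → F → Prop} {ℓ : ℕ}

/-- Root lemma: each element of `Q(uσ)` is `▷_ℓ`-below `fⁿ(nsσ)`, for `u`
below the lhs `f(ns;ss)` in the POE* order. -/
theorem root_embed {f : F} {ns ss : List (Tm F V)} (_hf : f ∉ C)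
    (hcon : ∀ t ∈ ns ++ ss, IsConTm C t) (hσ : ∀ v, IsVal C (σ v)) :
    ∀ (n : ℕ) {u : Tm F V}, size u ≤ n → Poe prec C (Tm.app f ns ss) u → size u ≤ ℓ →
    ∀ {q}, QRel C (subst σ u) q →
    ∀ x ∈ q, Poel prec ℓ (Sum.inl (Tm.app f (ns.map (subst σ)) [])) (Sum.inl x) := by
  intro n
  induction n using Nat.strong_induction_on with
  | _ n ih =>
  intro u hun hpoe huℓ q hq x hx
  cases hpoe with
  | sub hm =>
    rw [val_qrel_nil (con_subst_val (hcon _ hm) hσ) hq] at hx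
    simp at hx
  | subtrans hm hu =>
    have hcu : IsConTm C u :=
      subeq_con (hcon _ hm) (ssub_subeq (con_poe_ssub hu (hcon _ hm)))
    rw [val_qrel_nil (con_subst_val hcu hσ) hq] at hx
    simp at hx
  | @ia _ g _ _ tn ts _ hprec hnsub hts =>
    rw [subst_app] at hq
    cases hq with
    | val hv => simp at hx
    | app hnv hql =>
      rw [List.mem_cons] at hx
      rcases hx with rfl | hx
      · refine Poel.ia hprec ?_ ?_
        · rintro t' ht'
          rcases List.mem_map.1 ht' with ⟨w, hw, rfl⟩
          obtain ⟨f0, ns0, ss0, heq, nrm, hm, hsub⟩ := hnsub w hw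
          injection heq with h1 h2 h3
          subst h2
          exact SSub.nrm (List.mem_map_of_mem hm) (subst_subeq hsub)
        · rw [List.length_map]
          have h1 := length_le_size_sum tn
          rw [size_app] at huℓ
          omega
      · obtain ⟨t', ht', q', hq', hx⟩ := qlist_mem_flatten hql hx
        rcases List.mem_map.1 ht' with ⟨w, hw, rfl⟩
        have hlt : size w < size (Tm.app g tn ts) := size_lt_of_mem (List.mem_append_right _ hw)
        exact ih (size w) (by omega) (le_refl _) (hts w hw) (by omega) hq' x hx
  | @tsc _ _ _ tn ts _ hprod hts =>
    rw [subst_app] at hq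
    cases hq with
    | val hv => simp at hx
    | app hnv hql =>
      rw [List.mem_cons] at hx
      rcases hx with rfl | hx
      · obtain ⟨h1, h2⟩ := poeProd_forall2 (σ := σ) hprod
          (fun a ha => hcon a (List.mem_append_left _ ha))
        exact Poel.tsc h1 h2
      · obtain ⟨t', ht', q', hq', hx⟩ := qlist_mem_flatten hql hx
        rcases List.mem_map.1 ht' with ⟨w, hw, rfl⟩
        have hlt : size w < size (Tm.app f tn ts) := size_lt_of_mem (List.mem_append_right _ hw)
        exact ih (size w) (by omega) (le_refl _) (hts w hw) (by omega) hq' x hx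

end Tm
namespace Tm
variable {F V : Type} {C : Set F} {prec : F → F → Prop} {ℓ : ℕ}

@[simp] theorem toL_inl (t : Tm F V) : toL (Sum.inl t : TS F V) = [t] := rfl
@[simp] theorem toL_inr (l : List (Tm F V)) : toL (Sum.inr l : TS F V) = l := rfl

@[simp] theorem flatten_map_toL_inl (l : List (Tm F V)) :
    (((l.map Sum.inl).map (toL (F := F) (V := V))).flatten) = l := by
  induction l with
  | nil => rfl
  | cons a as ih => simpa using ih

@[simp] theorem flatten_map_toL_comp (l : List (Tm F V)) :
    (l.map (toL (F := F) (V := V) ∘ Sum.inl)).flatten = l := by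
  induction l with
  | nil => rfl
  | cons a as ih => simpa using ih

@[simp] theorem flatten_flatten_toL (q : List (List (Tm F V))) :
    ((q.map (List.map (toL (F := F) (V := V) ∘ Sum.inl))).flatten).flatten = q.flatten := by
  induction q with
  | nil => rfl
  | cons a as ih => simp [ih]

end Tm

open Tm in
theorem predicative_embedding' {F V : Type} (C : Set F) (prec : F → F → Prop)
    (R : Set (Tm F V × Tm F V)) (hcompat : PoeCompatible prec C R)
    (ℓ : ℕ) (hℓ : ∀ p ∈ R, size p.2 ≤ ℓ)
    {s t : Tm F V} (hst : Rew C R s t) : TN C s →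
    ∀ {qs qt : List (Tm F V)}, QRel C s qs → QRel C t qt →
    Poel prec ℓ (Sum.inr qs) (Sum.inr qt) := by
  induction hst with
  | @root l r σ hR hσ =>
    intro hs qs qt hqs hqt
    obtain ⟨hpoe, f, ns, ss, heq, hf, hcon⟩ := hcompat _ hR
    have heq2 : l = Tm.app f ns ss := heq
    have hpoe2 : Poe prec C (Tm.app f ns ss) r := heq2 ▸ hpoe
    rw [heq2, subst_app] at hqs
    cases hqs with
    | val hv => exact absurd (isval_f_mem hv) hf
    | app hnv hql =>
      have hflat : _ = [] := qlist_vals_nil hql (by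
        rintro x hx
        rcases List.mem_map.1 hx with ⟨w, hw, rfl⟩
        exact con_subst_val (hcon _ (List.mem_append_right _ hw)) hσ)
      rw [hflat]
      refine Poel.ms [Sum.inr qt] (by simp [toL]) ?_
      refine PoelProd.strict ?_ PoelGE.nil
      refine Poel.ialst ?_ ?_
      · intro x hx
        exact root_embed hf hcon hσ (size r) (le_refl _) hpoe2 (hℓ _ hR) hqt x hx
      · exact le_trans (qrel_len hσ hqt) (hℓ _ hR)
  | @ctxtN s' t' f ns₁ ns₂ ss hrew ih =>
    intro hs qs qt hqs hqt
    exfalso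
    cases hs with
    | val hv => have := isval_nrm_nil hv; simp at this
    | app hvn hts => exact val_not_rew hcompat hrew (hvn _ (by simp))
  | @ctxtS u u' f ns ss₁ ss₂ hrew ih =>
    intro hs qs qt hqs hqt
    have htnu : TN C u := by
      cases hs with
      | val hv =>
        exact absurd (val_not_rew hcompat hrew
          (by cases hv with | app _ h2 => exact h2 _ (by simp))) not_false
      | app hvn hts => exact hts _ (by simp)
    have hqs0 := hqs
    cases hqs with
    | val hv =>
      exact absurd (val_not_rew hcompat hrew
        (by cases hv with | app _ h2 => exact h2 _ (by simp))) not_false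
    | app hnv hql =>
      obtain ⟨q1, q2', rfl, hq1, hq2'⟩ := qlist_append hql
      cases hq2' with
      | @cons _ qu _ q2 hqu hq2 =>
        cases hqt with
        | val hv =>
          exact poel_to_nil (by simp) (fun x hx => qrel_shape hqs0 hx)
        | app hnv' hql' =>
          obtain ⟨p1, p2', rfl, hp1, hp2'⟩ := qlist_append hql'
          cases hp2' with
          | @cons _ pu _ p2 hpu hp2 =>
            obtain rfl : q1 = p1 := qlist_fun hq1 hp1
            obtain rfl : q2 = p2 := qlist_fun hq2 hp2
            have hih := ih htnu hqu hpu
            cases hih with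
            | @ms _ _ bs hts hprod =>
              refine Poel.ms (Sum.inl (Tm.app f ns []) ::
                ((q1.flatten.map Sum.inl) ++ bs ++ (q2.flatten.map Sum.inl))) ?_ ?_
              · subst hts
                simp
              · simp only [List.map_cons, List.flatten_cons, List.flatten_append,
                  List.map_append]
                rw [List.append_assoc]
                exact PoelProd.cons_eq
                  (poelProd_append_left _ (poelProd_append_right hprod _))

open Tm in
/-- Predicative embedding of rewriting: for a POE*-compatible TRS `R` and `ℓ`
(a bound on) the maximal size of right-hand sides of `R`, if `s ∈ T_n` and
`s →_R t` then `Q(s) ▷_ℓ Q(t)`. -/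
theorem predicative_embedding {F V : Type} (C : Set F) (prec : F → F → Prop)
    (R : Set (Tm F V × Tm F V)) (hcompat : PoeCompatible prec C R)
    (ℓ : ℕ) (hℓ : ∀ p ∈ R, size p.2 ≤ ℓ)
    {s t : Tm F V} (hs : TN C s) (hst : Rew C R s t)
    {qs qt : List (Tm F V)} (hqs : QRel C s qs) (hqt : QRel C t qt) :
    Poel prec ℓ (Sum.inr qs) (Sum.inr qt) := by
  exact predicative_embedding' C prec R hcompat ℓ hℓ hst hs hqs hqt
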